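/- Let u be a solution of the damped equation u'' + A u + u' = 0 with data (u0,u1) ∈ H × H. Then the auxiliary quantity ‖u(t)‖_{E♯}² = ⟨A u(t), u(t)⟩ + ‖u'(t) + (1/2) u(t)‖² + (1/4)‖u(t)‖² is differentiable in t and satisfies (d/dt) ‖u(t)‖_{E♯}² + E(u;t) = 0 for all t ≥ 0, where E(u;t) = ‖u'(t)‖² + ⟨A u(t), u(t)⟩. -/

import Mathlib

open scoped RealInnerProductSpace

/-- the auxiliary quantity
`‖u(t)‖_{E♯}² = ⟨A u, u⟩ + ‖u' + u/2‖² + ‖u‖²/4` satisfies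
`(d/dt) ‖u(t)‖_{E♯}² + E(u;t) = 0` along solutions of `u'' + A u + u' = 0`. -/
theorem stmt_3 {H : Type*} [NormedAddCommGroup H] [InnerProductSpace ℝ H] [CompleteSpace H]
    (A : H →L[ℝ] H) (hA : IsSelfAdjoint A) (hApos : ∀ x : H, 0 ≤ ⟪A x, x⟫)
    (u : ℝ → H) (u0 u1 : H) (hu : ContDiff ℝ 2 u)
    (heq : ∀ t ≥ (0:ℝ), deriv (deriv u) t + A (u t) + deriv u t = 0)
    (h0 : u 0 = u0) (h1 : deriv u 0 = u1) :
    ∀ t ≥ (0:ℝ),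
      HasDerivAt
        (fun s => ⟪A (u s), u s⟫ + ‖deriv u s + (1 / 2 : ℝ) • u s‖ ^ 2
          + (1 / 4) * ‖u s‖ ^ 2)
        (-(‖deriv u t‖ ^ 2 + ⟪A (u t), u t⟫)) t := by
  intro t ht
  have hu' : Differentiable ℝ u := hu.differentiable (by norm_num)
  have hud : ContDiff ℝ 1 (deriv u) := by
    have := (contDiff_succ_iff_deriv (n := 1)).1 (by exact_mod_cast hu)
    exact this.2.2
  have hud' : Differentiable ℝ (deriv u) := hud.differentiable one_ne_zero
  have h1 : HasDerivAt u (deriv u t) t := (hu' t).hasDerivAt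
  have h2 : HasDerivAt (deriv u) (deriv (deriv u) t) t := (hud' t).hasDerivAt
  have hAu : HasDerivAt (fun s => A (u s)) (A (deriv u t)) t :=
    A.hasFDerivAt.comp_hasDerivAt t h1
  have hw : deriv (deriv u) t = -A (u t) - deriv u t := by
    have := heq t ht
    linear_combination (norm := module) this
  have h3 : HasDerivAt (fun s => deriv u s + (1 / 2 : ℝ) • u s)
      (deriv (deriv u) t + (1 / 2 : ℝ) • deriv u t) t := h2.add (h1.const_smul _)
  have D := ((hAu.inner ℝ h1).add (h3.inner ℝ h3)).add ((h1.inner ℝ h1).const_mul (1 / 4 : ℝ))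
  have hfun : (fun s => ⟪A (u s), u s⟫ + ‖deriv u s + (1 / 2 : ℝ) • u s‖ ^ 2
      + (1 / 4) * ‖u s‖ ^ 2)
      = (fun s => ⟪A (u s), u s⟫ + ⟪deriv u s + (1 / 2 : ℝ) • u s,
          deriv u s + (1 / 2 : ℝ) • u s⟫ + (1 / 4 : ℝ) * ⟪u s, u s⟫) := by
    funext s; rw [real_inner_self_eq_norm_sq, real_inner_self_eq_norm_sq]
  rw [hfun]
  convert D using 1
  case e'_4 => rfl
  case e'_5 => rfl
  case e'_8 => rfl
  rw [hw]
  have hsym : ⟪A (deriv u t), u t⟫ = ⟪deriv u t, A (u t)⟫ := hA.isSymmetric _ _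
  have c1 : ⟪A (u t), u t⟫ = ⟪u t, A (u t)⟫ := real_inner_comm _ _
  have c2 : ⟪A (u t), deriv u t⟫ = ⟪deriv u t, A (u t)⟫ := real_inner_comm _ _
  have c3 : ⟪u t, deriv u t⟫ = ⟪deriv u t, u t⟫ := real_inner_comm _ _
  simp only [inner_sub_left, inner_sub_right, inner_add_left, inner_add_right,
    inner_smul_left, inner_smul_right, inner_neg_left, inner_neg_right,
    real_inner_self_eq_norm_sq, conj_trivial]
  linear_combination -hsym - (1/2) * c1
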